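/- Let A, B, B' ⊆ V be subsets of a multigraph G with A, B nonempty and disjoint and B' ⊆ B, and let k ∈ ℕ. Then there exists a family 𝒴 of subsets of N(B') with |𝒴| ≤ 2^{3k} such that for every minimal (A,B)-cut (V1, V2) of cut-size at most k, the set N(B') ∩ V1 belongs to 𝒴. -/

import Mathlib

open Finset

variable {V : Type*} [Fintype V] [DecidableEq V]

/-- Cut-size of the cut `(V1, V ∖ V1)`. -/
def cutSize (w : V → V → ℕ) (V1 : Finset V) : ℕ :=
  ∑ u ∈ V1, ∑ v ∈ V1ᶜ, w u v

/-- Boundary `δ(X)`: unordered pairs `{u,v}` with `u ∈ X`, `v ∉ X`, `w u v > 0`. -/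
def bdry (w : V → V → ℕ) (X : Finset V) : Set (Sym2 V) :=
  {e | ∃ u v, e = s(u, v) ∧ u ∈ X ∧ v ∉ X ∧ 0 < w u v}

/-- `(A,B)`-cut, represented by its first part `V1` (the second part is `V1ᶜ`). -/
def IsCut (A B V1 : Finset V) : Prop := A ⊆ V1 ∧ B ⊆ V1ᶜ

/-- Minimal `(A,B)`-cut. -/
def IsMinimalCut (w : V → V → ℕ) (A B V1 : Finset V) : Prop :=
  IsCut A B V1 ∧
  (¬ ∃ V1' : Finset V, A ⊆ V1' ∧ V1' ⊂ V1 ∧ bdry w V1' ⊆ bdry w V1) ∧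
  (¬ ∃ V2' : Finset V, B ⊆ V2' ∧ V2' ⊂ V1ᶜ ∧ bdry w V2' ⊆ bdry w V1)

/-- Minimum `(A,B)`-cut. -/
def IsMinCut (w : V → V → ℕ) (A B V1 : Finset V) : Prop :=
  IsCut A B V1 ∧ ∀ U : Finset V, IsCut A B U → cutSize w V1 ≤ cutSize w U

/-- MM `(A,B)`-cut: minimum cut with `|V1|` maximum among minimum cuts. -/
def IsMMCut (w : V → V → ℕ) (A B V1 : Finset V) : Prop :=
  IsMinCut w A B V1 ∧ ∀ U : Finset V, IsMinCut w A B U → U.card ≤ V1.card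

/-- Important `(A,B)`-cut. -/
def IsImportantCut (w : V → V → ℕ) (A B V1 : Finset V) : Prop :=
  IsMinimalCut w A B V1 ∧
  ¬ ∃ X' : Finset V, IsCut A B X' ∧ V1 ⊂ X' ∧ cutSize w X' ≤ cutSize w V1

/-- Degree of a vertex. -/
def deg (w : V → V → ℕ) (v : V) : ℕ := ∑ u, w v u

/-- `deg(v; X)`: degree of `v` towards `X ∖ {v}`. -/
def degIn (w : V → V → ℕ) (v : V) (X : Finset V) : ℕ :=
  ∑ u ∈ X.erase v, w v u

/-- Neighborhood `N(X)`. -/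
def nbhd (w : V → V → ℕ) (X : Finset V) : Finset V :=
  Finset.univ.filter (fun u => u ∉ X ∧ ∃ x ∈ X, 0 < w u x)

/-- Feasible `(A,B)`-cut for the bounded-degree cut instance `(G,A,B,uA,uB,k)`. -/
def FeasibleCut (w : V → V → ℕ) (uA uB : V → ℕ) (k : ℕ) (A B VA : Finset V) : Prop :=
  IsMinimalCut w A B VA ∧ cutSize w VA ≤ k ∧
  (∀ v ∈ VA, degIn w v VA ≤ uA v) ∧ (∀ v ∈ VAᶜ, degIn w v VAᶜ ≤ uB v)

/-- Feasibility of the instance `(G,A,B,uA,uB,k)`. -/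
def Feasible (w : V → V → ℕ) (uA uB : V → ℕ) (k : ℕ) (A B : Finset V) : Prop :=
  ∃ VA : Finset V, FeasibleCut w uA uB k A B VA

/-- Unsatisfied vertices w.r.t. an upper-bound function `u` : `{v : deg(v) > u v}`. -/
def unsat (w : V → V → ℕ) (u : V → ℕ) : Finset V :=
  Finset.univ.filter (fun v => u v < deg w v)

/-- Easy instance. -/
def EasyInstance (w : V → V → ℕ) (uA uB : V → ℕ) (A B : Finset V) : Prop :=
  unsat w uA ∪ unsat w uB ⊆ A ∪ B ∧
  nbhd w (unsat w uA ∩ A) ⊆ A ∪ B ∧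
  nbhd w (unsat w uB ∩ B) ⊆ A ∪ B

/-- `A_π` for the cut `π = (V1, V1ᶜ)`. -/
def Api (w : V → V → ℕ) (uA uB : V → ℕ) (A V1 : Finset V) : Finset V :=
  A ∪ (unsat w uA ∩ V1) ∪ (unsat w uB ∩ V1) ∪
    (nbhd w (unsat w uA ∩ V1) ∩ V1) ∪ (nbhd w (unsat w uB ∩ V1ᶜ) ∩ V1)

/-- `B_π` for the cut `π = (V1, V1ᶜ)`. -/
def Bpi (w : V → V → ℕ) (uA uB : V → ℕ) (B V1 : Finset V) : Finset V :=
  B ∪ (unsat w uA ∩ V1ᶜ) ∪ (unsat w uB ∩ V1ᶜ) ∪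
    (nbhd w (unsat w uA ∩ V1) ∩ V1ᶜ) ∪ (nbhd w (unsat w uB ∩ V1ᶜ) ∩ V1ᶜ)

section Aux
attribute [local instance] Classical.propDecidable

lemma cutSize_prod (w : V → V → ℕ) (X : Finset V) :
    cutSize w X = ∑ p ∈ X ×ˢ Xᶜ, w p.1 p.2 := by
  rw [cutSize, Finset.sum_product]

lemma cutSize_eq (w : V → V → ℕ) (X : Finset V) :
    cutSize w X = ∑ p ∈ univ ×ˢ univ, (if p.1 ∈ X ∧ p.2 ∉ X then w p.1 p.2 else 0) := by
  rw [cutSize, Finset.sum_product]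
  rw [← Finset.sum_subset (Finset.subset_univ X)]
  · apply Finset.sum_congr rfl
    intro u hu
    rw [← Finset.sum_subset (Finset.subset_univ Xᶜ)]
    · apply Finset.sum_congr rfl
      intro v hv
      simp [Finset.mem_compl.mp hv, hu]
    · intro v _ hv
      simp [Finset.mem_compl.not.mp hv, not_not.mp (by simpa using hv)]
  · intro u _ hu
    simp [hu]

lemma submod (w : V → V → ℕ) (X Y : Finset V) :
    cutSize w (X ∪ Y) + cutSize w (X ∩ Y) ≤ cutSize w X + cutSize w Y := by
  simp only [cutSize_eq, ← Finset.sum_add_distrib]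
  apply Finset.sum_le_sum
  rintro ⟨p, q⟩ _
  by_cases h1 : p ∈ X <;> by_cases h2 : p ∈ Y <;> by_cases h3 : q ∈ X <;> by_cases h4 : q ∈ Y <;>
    simp [h1, h2, h3, h4]

lemma term_le_cutSize (w : V → V → ℕ) {X : Finset V} {p q : V} (hp : p ∈ X) (hq : q ∉ X) :
    w p q ≤ cutSize w X := by
  rw [cutSize_prod]
  have : (p, q) ∈ X ×ˢ Xᶜ := by simp [Finset.mem_product, hp, hq]
  exact Finset.single_le_sum (f := fun p : V × V => w p.1 p.2) (fun _ _ => Nat.zero_le _) this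

def IsMinC (w : V → V → ℕ) (A B X : Finset V) : Prop :=
  IsCut A B X ∧ ∀ Y : Finset V, IsCut A B Y → cutSize w X ≤ cutSize w Y

noncomputable def Vmax (w : V → V → ℕ) (A B : Finset V) : Finset V :=
  (univ.powerset.filter (fun X => IsMinC w A B X)).sup id

lemma cut_union {A B X Y : Finset V} (hX : IsCut A B X) (hY : IsCut A B Y) :
    IsCut A B (X ∪ Y) :=
  ⟨hX.1.trans Finset.subset_union_left, by
    intro b hb; simp only [Finset.mem_compl, Finset.mem_union]
    push_neg
    exact ⟨Finset.mem_compl.mp (hX.2 hb), Finset.mem_compl.mp (hY.2 hb)⟩⟩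

lemma cut_inter {A B X Y : Finset V} (hX : IsCut A B X) (hY : IsCut A B Y) :
    IsCut A B (X ∩ Y) :=
  ⟨Finset.subset_inter hX.1 hY.1, fun b hb => by
    simp only [Finset.mem_compl, Finset.mem_inter]
    intro h; exact Finset.mem_compl.mp (hX.2 hb) h.1⟩

lemma minc_union {w : V → V → ℕ} {A B X Y : Finset V} (hX : IsMinC w A B X)
    (hY : IsMinC w A B Y) : IsMinC w A B (X ∪ Y) := by
  refine ⟨cut_union hX.1 hY.1, fun Z hZ => ?_⟩
  have h1 := submod w X Y
  have h2 := hY.2 _ (cut_inter hX.1 hY.1)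
  have h3 := hX.2 _ hZ
  omega

lemma exists_minc (w : V → V → ℕ) {A B : Finset V} (hAB : Disjoint A B) :
    ∃ X, IsMinC w A B X := by
  have hBc : IsCut A B Bᶜ :=
    ⟨fun a ha => Finset.mem_compl.mpr (Finset.disjoint_left.mp hAB ha), by simp⟩
  obtain ⟨X, hX, hmin⟩ := Finset.exists_min_image (univ.powerset.filter (fun X => IsCut A B X))
    (cutSize w) ⟨Bᶜ, by simpa using hBc⟩
  refine ⟨X, (Finset.mem_filter.mp hX).2, fun Y hY => hmin Y (by simpa using hY)⟩

lemma minc_subset_Vmax {w : V → V → ℕ} {A B X : Finset V} (hX : IsMinC w A B X) :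
    X ⊆ Vmax w A B := by
  have := Finset.le_sup (f := id) (b := X)
    (s := univ.powerset.filter (fun X => IsMinC w A B X)) (by simpa using hX)
  simpa [Vmax] using this

lemma Vmax_minc {w : V → V → ℕ} {A B : Finset V} (hAB : Disjoint A B) :
    IsMinC w A B (Vmax w A B) := by
  obtain ⟨X₀, hX₀⟩ := exists_minc w hAB
  have : IsMinC w A B (Vmax w A B) ∨ Vmax w A B = ∅ := by
    rw [Vmax]
    apply Finset.sup_induction (p := fun Z => IsMinC w A B Z ∨ Z = ∅)
    · exact Or.inr rfl
    · rintro a (ha | rfl) b (hb | rfl)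
      · exact Or.inl (minc_union ha hb)
      · simpa using Or.inl ha
      · simpa using Or.inl hb
      · simp
    · intro b hb; exact Or.inl (by simpa using (Finset.mem_filter.mp hb).2)
  rcases this with h | h
  · exact h
  · have hsub : X₀ ⊆ Vmax w A B := minc_subset_Vmax hX₀
    rw [h] at hsub
    have : X₀ = ∅ := Finset.subset_empty.mp hsub
    rw [h, ← this]; exact hX₀

def ReachIn (w : V → V → ℕ) (Z : Finset V) (a z : V) : Prop :=
  Relation.ReflTransGen (fun p q => p ∈ Z ∧ q ∈ Z ∧ 0 < w p q) a z

lemma reachIn_mono {w : V → V → ℕ} {Z Z' : Finset V} (h : Z ⊆ Z') {a z : V}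
    (hr : ReachIn w Z a z) : ReachIn w Z' a z :=
  Relation.ReflTransGen.mono (fun _ _ h' => ⟨h h'.1, h h'.2.1, h'.2.2⟩) a z hr

lemma reach_zero {w : V → V → ℕ} {M Z : Finset V} {a z : V}
    (h0 : cutSize w M = 0) (ha : a ∈ M) (hr : ReachIn w Z a z) : z ∈ M := by
  induction hr with
  | refl => exact ha
  | tail _ hstep ih =>
      by_contra hq
      have := term_le_cutSize w ih hq
      omega

def wdec (w : V → V → ℕ) (u v : V) : V → V → ℕ :=
  fun a b => w a b - (if (a = u ∧ b = v) ∨ (a = v ∧ b = u) then 1 else 0)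

lemma wdec_symm {w : V → V → ℕ} (hs : ∀ a b, w a b = w b a) (u v : V) :
    ∀ a b, wdec w u v a b = wdec w u v b a := by
  intro a b
  simp only [wdec, hs a b]
  congr 1
  exact if_congr (by tauto) rfl rfl

lemma wdec_le (w : V → V → ℕ) (u v a b : V) : wdec w u v a b ≤ w a b := Nat.sub_le _ _

lemma cutSize_wdec_le (w : V → V → ℕ) (u v : V) (X : Finset V) :
    cutSize (wdec w u v) X ≤ cutSize w X := by
  rw [cutSize_prod, cutSize_prod]
  exact Finset.sum_le_sum (fun p _ => wdec_le w u v p.1 p.2)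

lemma cutSize_le_wdec (w : V → V → ℕ) {u v : V} (huv : u ≠ v) (X : Finset V) :
    cutSize w X ≤ cutSize (wdec w u v) X + 1 := by
  rw [cutSize_prod, cutSize_prod]
  have hpt : ∀ p : V × V, w p.1 p.2 ≤ wdec w u v p.1 p.2 +
      ((if p = (u, v) then 1 else 0) + (if p = (v, u) then 1 else 0)) := by
    rintro ⟨a, b⟩
    simp only [wdec, Prod.mk.injEq]
    by_cases h1 : a = u ∧ b = v <;> by_cases h2 : a = v ∧ b = u <;>
      simp [h1, h2] <;> omega
  calc ∑ p ∈ X ×ˢ Xᶜ, w p.1 p.2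
      ≤ ∑ p ∈ X ×ˢ Xᶜ, (wdec w u v p.1 p.2 +
        ((if p = (u, v) then 1 else 0) + (if p = (v, u) then 1 else 0))) :=
        Finset.sum_le_sum (fun p _ => hpt p)
    _ = (∑ p ∈ X ×ˢ Xᶜ, wdec w u v p.1 p.2) +
        ((∑ p ∈ X ×ˢ Xᶜ, if p = (u, v) then 1 else 0) +
         (∑ p ∈ X ×ˢ Xᶜ, if p = (v, u) then 1 else 0)) := by
        rw [Finset.sum_add_distrib, Finset.sum_add_distrib]
    _ ≤ (∑ p ∈ X ×ˢ Xᶜ, wdec w u v p.1 p.2) + 1 := by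
        gcongr
        rw [Finset.sum_ite_eq' (X ×ˢ Xᶜ) ((u, v)) (fun _ => 1),
            Finset.sum_ite_eq' (X ×ˢ Xᶜ) ((v, u)) (fun _ => 1)]
        simp only [Finset.mem_product, Finset.mem_compl]
        by_cases hu : u ∈ X <;> by_cases hv : v ∈ X <;> simp [hu, hv]
    _ = _ := rfl

lemma cutSize_wdec_lt (w : V → V → ℕ) {u v : V} {X : Finset V}
    (hu : u ∈ X) (hv : v ∉ X) (hw : 0 < w u v) :
    cutSize (wdec w u v) X < cutSize w X := by
  rw [cutSize_prod, cutSize_prod]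
  apply Finset.sum_lt_sum (fun p _ => wdec_le w u v p.1 p.2)
  refine ⟨(u, v), Finset.mem_product.mpr ⟨hu, Finset.mem_compl.mpr hv⟩, ?_⟩
  have huv : u ≠ v := fun h => hv (h ▸ hu)
  simp only [wdec]
  simp [huv]
  omega

lemma exists_cross_edge {w : V → V → ℕ} {M : Finset V} (h : cutSize w M ≠ 0) :
    ∃ u ∈ M, ∃ v, v ∉ M ∧ 0 < w u v := by
  by_contra hc
  push_neg at hc
  apply h
  rw [cutSize]
  apply Finset.sum_eq_zero
  intro u hu
  apply Finset.sum_eq_zero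
  intro v hv
  have := hc u hu v (Finset.mem_compl.mp hv)
  omega

/-- The key recursion: a small family of cuts of size ≤ k dominating all
"A-reachable-mod-Vmax" cuts of size ≤ k. -/
lemma key : ∀ (m : ℕ) (w : V → V → ℕ), (∀ a b, w a b = w b a) →
    ∀ (A B : Finset V) (k : ℕ), Disjoint A B →
    (∀ X : Finset V, IsCut A B X → 2*k ≤ m + cutSize w X) →
    ∃ ℱ : Finset (Finset V), ℱ.card ≤ 2^m ∧ (∀ F ∈ ℱ, IsCut A B F ∧ cutSize w F ≤ k) ∧
      ∀ Z : Finset V, IsCut A B Z → cutSize w Z ≤ k →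
        (∀ z ∈ Z, z ∈ Vmax w A B ∨ ∃ a ∈ A, ReachIn w Z a z) →
        ∃ F ∈ ℱ, Z ⊆ F := by
  intro m
  induction m with
  | zero =>
      intro w hs A B k hAB hμ
      have hMmin := Vmax_minc (w := w) hAB
      by_cases h0 : cutSize w (Vmax w A B) = 0
      · refine ⟨{Vmax w A B}, by simp, by simp [hMmin.1, h0], ?_⟩
        intro Z hZ hZk hsr
        refine ⟨Vmax w A B, by simp, ?_⟩
        intro z hz
        rcases hsr z hz with h | ⟨a, ha, hr⟩
        · exact h
        · exact reach_zero h0 (hMmin.1.1 ha) hr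
      · refine ⟨∅, by simp, by simp, ?_⟩
        intro Z hZ hZk _
        have h1 := hMmin.2 Z hZ
        have h2 := hμ Z hZ
        omega
  | succ m ih =>
      intro w hs A B k hAB hμ
      have hMmin := Vmax_minc (w := w) hAB
      set M := Vmax w A B with hM
      by_cases h0 : cutSize w M = 0
      · refine ⟨{M}, by simp [Nat.one_le_two_pow], by simp [hMmin.1, h0], ?_⟩
        intro Z hZ hZk hsr
        refine ⟨M, by simp, ?_⟩
        intro z hz
        rcases hsr z hz with h | ⟨a, ha, hr⟩
        · exact h
        · exact reach_zero h0 (hMmin.1.1 ha) hr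
      by_cases hk0 : k = 0
      · refine ⟨∅, by simp, by simp, ?_⟩
        intro Z hZ hZk _
        have h1 := hMmin.2 Z hZ
        omega
      obtain ⟨u, hu, v, hv, hwuv⟩ := exists_cross_edge h0
      have huv : u ≠ v := fun h => hv (h ▸ hu)
      -- Branch 1: v on the A-side
      have h1 : ∃ ℱ₁ : Finset (Finset V), ℱ₁.card ≤ 2^m ∧
          (∀ F ∈ ℱ₁, IsCut A B F ∧ cutSize w F ≤ k) ∧
          ∀ Z' : Finset V, IsCut A B Z' → cutSize w Z' ≤ k → v ∈ Z' → M ⊆ Z' →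
            (∀ z ∈ Z', z ∈ M ∨ ∃ a ∈ A, ReachIn w Z' a z) → ∃ F ∈ ℱ₁, Z' ⊆ F := by
        by_cases hvB : v ∈ B
        · refine ⟨∅, by simp, by simp, ?_⟩
          intro Z' hZ' _ hvZ' _ _
          exact absurd (hZ'.2 hvB) (by simp [hvZ'])
        · have hAB' : Disjoint (insert v A) B := by
            rw [Finset.insert_eq]
            exact Finset.disjoint_union_left.mpr ⟨by simpa using hvB, hAB⟩
          have budget1 : ∀ X : Finset V, IsCut (insert v A) B X →
              2*k ≤ m + cutSize w X := by
            intro X hX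
            have hXcut : IsCut A B X :=
              ⟨(Finset.subset_insert v A).trans hX.1, hX.2⟩
            have h2 := hμ _ hXcut
            have hMX : cutSize w M < cutSize w X := by
              by_contra hle
              push_neg at hle
              have hXmin : IsMinC w A B X :=
                ⟨hXcut, fun Y hY => le_trans hle (hMmin.2 Y hY)⟩
              exact hv (minc_subset_Vmax hXmin (hX.1 (Finset.mem_insert_self v A)))
            have h3 := hμ _ hMmin.1
            omega
          obtain ⟨ℱ₁, hc, hmem, hcov⟩ := ih w hs (insert v A) B k hAB' budget1
          refine ⟨ℱ₁, hc, fun F hF =>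
            ⟨⟨(Finset.subset_insert v A).trans (hmem F hF).1.1, (hmem F hF).1.2⟩,
              (hmem F hF).2⟩, ?_⟩
          intro Z' hZ' hZk hvZ' hMZ' hreach
          apply hcov Z' ⟨Finset.insert_subset hvZ' hZ'.1, hZ'.2⟩ hZk
          have hMsub : M ⊆ Vmax w (insert v A) B := by
            obtain ⟨X₁, hX₁⟩ := exists_minc w hAB'
            have hXcut : IsCut A B X₁ :=
              ⟨(Finset.subset_insert v A).trans hX₁.1.1, hX₁.1.2⟩
            have hunion : IsMinC w (insert v A) B (M ∪ X₁) := by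
              constructor
              · refine ⟨?_, (cut_union hMmin.1 hXcut).2⟩
                intro x hx
                rcases Finset.mem_insert.mp hx with rfl | hx'
                · exact Finset.mem_union_right _ (hX₁.1.1 (Finset.mem_insert_self x A))
                · exact Finset.mem_union_left _ (hMmin.1.1 hx')
              · intro Y hY
                have ha := submod w M X₁
                have hb := hMmin.2 _ (cut_inter hMmin.1 hXcut)
                have hc' := hX₁.2 Y hY
                omega
            exact Finset.Subset.trans Finset.subset_union_left (minc_subset_Vmax hunion)
          intro z hz
          rcases hreach z hz with h | ⟨a, ha, hr⟩
          · exact Or.inl (hMsub h)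
          · exact Or.inr ⟨a, Finset.mem_insert_of_mem ha, hr⟩
      -- Branch 2: v on the B-side; delete one copy of the edge uv
      have h2 : ∃ ℱ₂ : Finset (Finset V), ℱ₂.card ≤ 2^m ∧
          (∀ F ∈ ℱ₂, IsCut A B F ∧ cutSize w F ≤ k) ∧
          ∀ Z' : Finset V, IsCut A B Z' → cutSize w Z' ≤ k → v ∉ Z' → M ⊆ Z' →
            (∀ z ∈ Z', z ∈ M ∨ ∃ a ∈ A, ReachIn w Z' a z) → ∃ F ∈ ℱ₂, Z' ⊆ F := by
        have hs' := wdec_symm hs u v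
        have budget2 : ∀ X : Finset V, IsCut A B X → 2*(k-1) ≤ m + cutSize (wdec w u v) X := by
          intro X hX
          have h2 := hμ X hX
          have h3 := cutSize_le_wdec w huv X
          omega
        obtain ⟨ℱ₂, hc2, hmem2, hcov2⟩ := ih (wdec w u v) hs' A B (k-1) hAB budget2
        have hMmin' : IsMinC (wdec w u v) A B M := by
          refine ⟨hMmin.1, fun Y hY => ?_⟩
          have ha := cutSize_le_wdec w huv Y
          have hb := hMmin.2 Y hY
          have hc' := cutSize_wdec_lt w hu hv hwuv
          omega
        refine ⟨ℱ₂, hc2, fun F hF => ⟨(hmem2 F hF).1, ?_⟩, ?_⟩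
        · have ha := cutSize_le_wdec w huv F
          have hb := (hmem2 F hF).2
          omega
        intro Z' hZ' hZk hvZ' hMZ' hreach
        apply hcov2 Z' hZ'
        · have ha := cutSize_wdec_lt w (hMZ' hu) hvZ' hwuv
          omega
        · intro z hz
          rcases hreach z hz with h | ⟨a, ha, hr⟩
          · exact Or.inl (minc_subset_Vmax hMmin' h)
          · refine Or.inr ⟨a, ha, ?_⟩
            refine Relation.ReflTransGen.mono ?_ _ _ hr
            rintro p q ⟨hp, hq, hwpq⟩
            refine ⟨hp, hq, ?_⟩
            have hqv : q ≠ v := fun h => hvZ' (h ▸ hq)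
            have hpv : p ≠ v := fun h => hvZ' (h ▸ hp)
            simp only [wdec, hqv, hpv]
            simpa [hqv, hpv] using hwpq
      obtain ⟨ℱ₁, hc1, hmem1, hcov1⟩ := h1
      obtain ⟨ℱ₂, hc2, hmem2, hcov2⟩ := h2
      refine ⟨ℱ₁ ∪ ℱ₂, ?_, ?_, ?_⟩
      · calc (ℱ₁ ∪ ℱ₂).card ≤ ℱ₁.card + ℱ₂.card := Finset.card_union_le _ _
          _ ≤ 2^m + 2^m := Nat.add_le_add hc1 hc2
          _ = 2^(m+1) := by ring
      · intro F hF
        rcases Finset.mem_union.mp hF with h | h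
        · exact hmem1 F h
        · exact hmem2 F h
      · intro Z hZ hZk hsr
        set Z' := Z ∪ M with hZ'def
        have hZ'cut : IsCut A B Z' := cut_union hZ hMmin.1
        have hZ'k : cutSize w Z' ≤ k := by
          rw [hZ'def]
          have ha := submod w Z M
          have hb := hMmin.2 _ (cut_inter hZ hMmin.1)
          omega
        have hMZ' : M ⊆ Z' := Finset.subset_union_right
        have hsr' : ∀ z ∈ Z', z ∈ M ∨ ∃ a ∈ A, ReachIn w Z' a z := by
          intro z hz
          rcases Finset.mem_union.mp hz with hzZ | hzM
          · rcases hsr z hzZ with h | ⟨a, ha, hr⟩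
            · exact Or.inl h
            · exact Or.inr ⟨a, ha, reachIn_mono Finset.subset_union_left hr⟩
          · exact Or.inl hzM
        by_cases hvZ : v ∈ Z'
        · obtain ⟨F, hF, hsub⟩ := hcov1 Z' hZ'cut hZ'k hvZ hMZ' hsr'
          exact ⟨F, Finset.mem_union_left _ hF, Finset.Subset.trans Finset.subset_union_left hsub⟩
        · obtain ⟨F, hF, hsub⟩ := hcov2 Z' hZ'cut hZ'k hvZ hMZ' hsr'
          exact ⟨F, Finset.mem_union_right _ hF, Finset.Subset.trans Finset.subset_union_left hsub⟩

end Aux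

section Aux2
attribute [local instance] Classical.propDecidable

lemma minimal_reach {w : V → V → ℕ} {A B V1 : Finset V}
    (hmin : IsMinimalCut w A B V1) : ∀ z ∈ V1, ∃ a ∈ A, ReachIn w V1 a z := by
  classical
  set R := V1.filter (fun z => ∃ a ∈ A, ReachIn w V1 a z) with hR
  have hAR : A ⊆ R := by
    intro a ha
    exact Finset.mem_filter.mpr ⟨hmin.1.1 ha, a, ha, Relation.ReflTransGen.refl⟩
  have hRV1 : R ⊆ V1 := Finset.filter_subset _ _
  have hbd : bdry w R ⊆ bdry w V1 := by
    rintro e ⟨p, q, he, hpR, hqR, hw⟩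
    obtain ⟨hpV1, a, ha, hr⟩ := Finset.mem_filter.mp hpR
    by_cases hqV1 : q ∈ V1
    · exact absurd (Finset.mem_filter.mpr
        ⟨hqV1, a, ha, Relation.ReflTransGen.tail hr ⟨hpV1, hqV1, hw⟩⟩) hqR
    · exact ⟨p, q, he, hpV1, hqV1, hw⟩
  have hReq : R = V1 := by
    by_contra hne
    exact hmin.2.1 ⟨R, hAR, ssubset_of_subset_of_ne hRV1 hne, hbd⟩
  intro z hz
  rw [← hReq] at hz
  exact (Finset.mem_filter.mp hz).2

lemma card_nbhd_le {w : V → V → ℕ} {B' F : Finset V} (hB' : B' ⊆ Fᶜ) :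
    (nbhd w B' ∩ F).card ≤ cutSize w F := by
  have h1 : ∀ y ∈ nbhd w B' ∩ F, 1 ≤ ∑ v ∈ Fᶜ, w y v := by
    intro y hy
    obtain ⟨hyN, hyF⟩ := Finset.mem_inter.mp hy
    obtain ⟨-, -, x, hx, hwx⟩ := Finset.mem_filter.mp hyN
    calc 1 ≤ w y x := hwx
      _ ≤ ∑ v ∈ Fᶜ, w y v :=
        Finset.single_le_sum (fun _ _ => Nat.zero_le _) (hB' hx)
  calc (nbhd w B' ∩ F).card = ∑ y ∈ nbhd w B' ∩ F, 1 := by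
        simp
    _ ≤ ∑ y ∈ nbhd w B' ∩ F, ∑ v ∈ Fᶜ, w y v := Finset.sum_le_sum h1
    _ ≤ ∑ y ∈ F, ∑ v ∈ Fᶜ, w y v :=
        Finset.sum_le_sum_of_subset Finset.inter_subset_right
    _ = cutSize w F := rfl


/-- candidate sets for `N(B') ∩ V1` over minimal `(A,B)`-cuts of size `≤ k`. -/
theorem candidate_sets_two (w : V → V → ℕ)
    (hsymm : ∀ u v, w u v = w v u) (hloop : ∀ v, w v v = 0)
    (A B B' : Finset V) (hA : A.Nonempty) (hB : B.Nonempty)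
    (hAB : Disjoint A B) (hB' : B' ⊆ B) (k : ℕ) :
    ∃ 𝒴 : Finset (Finset V), 𝒴.card ≤ 2 ^ (3 * k) ∧ (∀ Y ∈ 𝒴, Y ⊆ nbhd w B') ∧
      ∀ V1 : Finset V, IsMinimalCut w A B V1 → cutSize w V1 ≤ k →
        nbhd w B' ∩ V1 ∈ 𝒴 := by
  classical
  obtain ⟨ℱ, hcard, hmem, hcov⟩ :=
    key (2*k) w hsymm A B k hAB (fun X _ => by omega)
  refine ⟨ℱ.biUnion (fun F => (nbhd w B' ∩ F).powerset), ?_, ?_, ?_⟩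
  · calc (ℱ.biUnion (fun F => (nbhd w B' ∩ F).powerset)).card
        ≤ ∑ F ∈ ℱ, (nbhd w B' ∩ F).powerset.card := Finset.card_biUnion_le
      _ ≤ ∑ _F ∈ ℱ, 2^k := by
          apply Finset.sum_le_sum
          intro F hF
          rw [Finset.card_powerset]
          apply Nat.pow_le_pow_right (by norm_num)
          calc (nbhd w B' ∩ F).card ≤ cutSize w F :=
                card_nbhd_le (hB'.trans (hmem F hF).1.2)
            _ ≤ k := (hmem F hF).2
      _ = ℱ.card * 2^k := by rw [Finset.sum_const, smul_eq_mul]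
      _ ≤ 2^(2*k) * 2^k := Nat.mul_le_mul_right _ hcard
      _ = 2^(3*k) := by rw [← pow_add]; ring_nf
  · intro Y hY
    obtain ⟨F, _, hYF⟩ := Finset.mem_biUnion.mp hY
    exact (Finset.mem_powerset.mp hYF).trans Finset.inter_subset_left
  · intro V1 hmin hk
    have hreach := minimal_reach hmin
    obtain ⟨F, hF, hsub⟩ := hcov V1 hmin.1 hk (fun z hz => Or.inr (hreach z hz))
    exact Finset.mem_biUnion.mpr ⟨F, hF,
      Finset.mem_powerset.mpr (Finset.inter_subset_inter (Finset.Subset.refl _) hsub)⟩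

end Aux2
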